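/- Let k ≥ 3 be an integer and for each integer m ≥ 1 define F_m = sup { k·Σ_{1 ≤ i < j ≤ m} w_i^{k−1}·w_j : w_1, …, w_m ≥ 0, Σ_{i=1}^m w_i = 1 }. Then the sequence (F_m) is nondecreasing, bounded above by 1, and converges to sup_{x ∈ (0,1]} k·x^{k−1}·(1−x)/(1−(1−x)^k). -/

import Mathlib

/-- `F_m = sup { k·Σ_{i<j} w_i^{k−1}·w_j : w ≥ 0, Σ w_i = 1 }`. -/
noncomputable def Fm (k m : ℕ) : ℝ :=
  sSup {r : ℝ | ∃ w : Fin m → ℝ, (∀ i, 0 ≤ w i) ∧ (∑ i, w i) = 1 ∧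
    r = (k : ℝ) * ∑ i : Fin m, ∑ j : Fin m,
          if i < j then w i ^ (k - 1) * w j else 0}

namespace FmAux

open Finset

/-- The target function of the limit. -/
noncomputable def gf (k : ℕ) : ℝ → ℝ :=
  fun x : ℝ => (k : ℝ) * x ^ (k - 1) * (1 - x) / (1 - (1 - x) ^ k)

/-- The limit value. -/
noncomputable def LL (k : ℕ) : ℝ := sSup (gf k '' Set.Ioc 0 1)

/-- The set of values of `f_m` on the simplex. -/
def FmSet (k m : ℕ) : Set ℝ :=
  {r : ℝ | ∃ w : Fin m → ℝ, (∀ i, 0 ≤ w i) ∧ (∑ i, w i) = 1 ∧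
    r = (k : ℝ) * ∑ i : Fin m, ∑ j : Fin m,
          if i < j then w i ^ (k - 1) * w j else 0}

lemma Fm_eq (k m : ℕ) : Fm k m = sSup (FmSet k m) := rfl

/-- Extension of `w` by zero to `ℕ`. -/
def vv (m : ℕ) (w : Fin m → ℝ) (n : ℕ) : ℝ := if h : n < m then w ⟨n, h⟩ else 0

/-- Tail sums. -/
noncomputable def SS (m : ℕ) (w : Fin m → ℝ) (n : ℕ) : ℝ :=
  ∑ j ∈ Finset.Ico n m, vv m w j

lemma vv_nonneg (m : ℕ) (w : Fin m → ℝ) (hw : ∀ i, 0 ≤ w i) (n : ℕ) : 0 ≤ vv m w n := by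
  unfold vv
  split
  · exact hw _
  · exact le_refl 0

lemma SS_nonneg (m : ℕ) (w : Fin m → ℝ) (hw : ∀ i, 0 ≤ w i) (n : ℕ) : 0 ≤ SS m w n :=
  Finset.sum_nonneg fun j _ => vv_nonneg m w hw j

lemma SS_zero (m : ℕ) (w : Fin m → ℝ) (hw1 : (∑ i, w i) = 1) : SS m w 0 = 1 := by
  rw [SS]
  rw [show Finset.Ico 0 m = Finset.range m from by ext; simp]
  rw [← Fin.sum_univ_eq_sum_range (fun n => vv m w n) m, ← hw1]
  apply Finset.sum_congr rfl
  intro i _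
  simp [vv, i.isLt]

lemma SS_top (m : ℕ) (w : Fin m → ℝ) : SS m w m = 0 := by simp [SS]

lemma SS_succ (m : ℕ) (w : Fin m → ℝ) {n : ℕ} (hn : n < m) :
    SS m w n = vv m w n + SS m w (n + 1) := by
  rw [SS, SS, Finset.sum_eq_sum_Ico_succ_bot hn]

lemma SS_succ_le (m : ℕ) (w : Fin m → ℝ) (hw : ∀ i, 0 ≤ w i) {n : ℕ} (hn : n < m) :
    SS m w (n + 1) ≤ SS m w n := by
  rw [SS_succ m w hn]
  have := vv_nonneg m w hw n
  linarith

/-- The double sum written via tail sums. -/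
lemma repr_sum (k m : ℕ) (w : Fin m → ℝ) :
    (∑ i : Fin m, ∑ j : Fin m, if i < j then w i ^ (k - 1) * w j else 0)
      = ∑ i ∈ Finset.range m, vv m w i ^ (k - 1) * SS m w (i + 1) := by
  have hw : ∀ l : Fin m, w l = vv m w l.val := fun l => by simp [vv, l.isLt]
  rw [← Fin.sum_univ_eq_sum_range (fun i => vv m w i ^ (k-1) * SS m w (i+1)) m]
  apply Finset.sum_congr rfl
  intro i _
  have h1 : (∑ j : Fin m, if i < j then w i ^ (k - 1) * w j else 0)
      = ∑ j ∈ Finset.range m, if i.val < j then vv m w i.val ^ (k - 1) * vv m w j else 0 := by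
    rw [← Fin.sum_univ_eq_sum_range
      (fun j => if i.val < j then vv m w i.val ^ (k-1) * vv m w j else 0) m]
    apply Finset.sum_congr rfl
    intro j _
    simp only [Fin.lt_def, ← hw]
  rw [h1, ← Finset.sum_filter]
  have h2 : (Finset.range m).filter (fun j => i.val < j) = Finset.Ico (i.val + 1) m := by
    ext j; simp [Finset.mem_filter, Finset.mem_Ico, Finset.mem_range]; omega
  rw [h2, SS, ← Finset.mul_sum]

/-- Binomial estimate `b^k + k (a-b)^{k-1} b ≤ a^k`. -/
lemma lemA (k : ℕ) (hk : 3 ≤ k) {a b : ℝ} (hb : 0 ≤ b) (hba : b ≤ a) :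
    b ^ k + (k : ℝ) * (a - b) ^ (k - 1) * b ≤ a ^ k := by
  have hc : 0 ≤ a - b := by linarith
  have hsub : ({0, k-1} : Finset ℕ) ⊆ Finset.range (k+1) := by
    intro i hi; simp only [mem_insert, mem_singleton] at hi
    rcases hi with rfl|rfl <;> simp <;> omega
  have hle : ∑ i ∈ ({0, k-1} : Finset ℕ), (a-b)^i * b^(k-i) * (k.choose i : ℝ)
      ≤ ∑ i ∈ Finset.range (k+1), (a-b)^i * b^(k-i) * (k.choose i : ℝ) := by
    apply Finset.sum_le_sum_of_subset_of_nonneg hsub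
    intro i _ _
    positivity
  rw [Finset.sum_pair (by omega : (0:ℕ) ≠ k-1)] at hle
  have hck : (k.choose (k-1) : ℝ) = k := by
    have h1 : k.choose (k - 1) = k.choose 1 := by
      rw [← Nat.choose_symm (by omega : 1 ≤ k)]
    rw [h1, Nat.choose_one_right]
  have hk1 : k - (k - 1) = 1 := by omega
  have hpow : a ^ k = ((a-b) + b) ^ k := by ring_nf
  rw [hpow, add_pow]
  calc b ^ k + (k:ℝ) * (a - b) ^ (k - 1) * b
      = (a-b)^0 * b^(k-0) * (k.choose 0 : ℝ)
          + (a-b)^(k-1) * b^(k-(k-1)) * (k.choose (k-1) : ℝ) := by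
        rw [hck, hk1]; simp [Nat.choose_zero_right]; ring
    _ ≤ _ := hle

lemma denom_pos (k : ℕ) (hk : 3 ≤ k) {x : ℝ} (hx : x ∈ Set.Ioc (0:ℝ) 1) :
    0 < 1 - (1 - x) ^ k := by
  have h0 : 0 ≤ 1 - x := by linarith [hx.2]
  have h1 : 1 - x < 1 := by linarith [hx.1]
  have := pow_lt_one₀ h0 h1 (by omega : k ≠ 0)
  linarith

lemma g_le_one (k : ℕ) (hk : 3 ≤ k) {x : ℝ} (hx : x ∈ Set.Ioc (0:ℝ) 1) :
    gf k x ≤ 1 := by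
  rw [gf, div_le_one (denom_pos k hk hx)]
  have := lemA k hk (b := 1 - x) (a := 1) (by linarith [hx.2]) (by linarith [hx.1])
  have hsx : (1:ℝ) - (1 - x) = x := by ring
  rw [hsx, one_pow] at this
  linarith

lemma bddAbove_g (k : ℕ) (hk : 3 ≤ k) : BddAbove (gf k '' Set.Ioc 0 1) := by
  refine ⟨1, ?_⟩
  rintro y ⟨x, hx, rfl⟩
  exact g_le_one k hk hx

lemma g_one (k : ℕ) : gf k 1 = 0 := by simp [gf]

lemma LL_nonneg (k : ℕ) (hk : 3 ≤ k) : 0 ≤ LL k := by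
  have : gf k 1 ≤ LL k := le_csSup (bddAbove_g k hk) ⟨1, by norm_num, rfl⟩
  rw [g_one k] at this; exact this

lemma LL_le_one (k : ℕ) (hk : 3 ≤ k) : LL k ≤ 1 := by
  have hne : (gf k '' Set.Ioc 0 1).Nonempty :=
    ⟨gf k 1, Set.mem_image_of_mem _ (by norm_num)⟩
  apply csSup_le hne
  rintro y ⟨x, hx, rfl⟩
  exact g_le_one k hk hx

/-- The key pointwise estimate used in telescoping. -/
lemma lemD (k : ℕ) (hk : 3 ≤ k) {a b : ℝ} (hb : 0 ≤ b) (hba : b ≤ a) :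
    (k : ℝ) * (a - b) ^ (k - 1) * b ≤ LL k * (a ^ k - b ^ k) := by
  rcases eq_or_lt_of_le hba with rfl | hlt
  · simp [zero_pow (by omega : k - 1 ≠ 0)]
  · have ha : 0 < a := lt_of_le_of_lt hb hlt
    set x := (a - b) / a with hxdef
    have hx : x ∈ Set.Ioc (0:ℝ) 1 := by
      constructor
      · exact div_pos (by linarith) ha
      · rw [div_le_one ha]; linarith
    have hxa : x * a = a - b := div_mul_cancel₀ _ (ne_of_gt ha)
    have h1x : (1 - x) * a = b := by
      linear_combination -hxa
    have hgL : gf k x ≤ LL k := le_csSup (bddAbove_g k hk) ⟨x, hx, rfl⟩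
    have hd := denom_pos k hk hx
    rw [gf, div_le_iff₀ hd] at hgL
    have hmul := mul_le_mul_of_nonneg_left hgL (le_of_lt (pow_pos ha k))
    have hL : (k : ℝ) * (a - b) ^ (k - 1) * b = a ^ k * ((k:ℝ) * x ^ (k-1) * (1 - x)) := by
      rw [← hxa, ← h1x, mul_pow]
      have h2 : a ^ (k - 1) * a = a ^ k := by
        rw [← pow_succ]; congr 1; omega
      calc (k:ℝ) * (x^(k-1) * a^(k-1)) * ((1-x)*a)
          = a^(k-1)*a * ((k:ℝ)*x^(k-1)*(1-x)) := by ring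
        _ = a^k * ((k:ℝ)*x^(k-1)*(1-x)) := by rw [h2]
    have hR : a ^ k - b ^ k = a ^ k * (1 - (1 - x) ^ k) := by
      rw [← h1x, mul_pow]; ring
    rw [hL, hR]
    calc a ^ k * ((k:ℝ) * x ^ (k-1) * (1 - x)) ≤ a ^ k * (LL k * (1 - (1-x)^k)) := hmul
      _ = LL k * (a ^ k * (1 - (1 - x) ^ k)) := by ring

/-- Every value of `f_m` on the simplex is at most `LL k`. -/
lemma lemE (k : ℕ) (hk : 3 ≤ k) (m : ℕ) (w : Fin m → ℝ) (hw : ∀ i, 0 ≤ w i)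
    (hw1 : (∑ i, w i) = 1) :
    (k : ℝ) * ∑ i : Fin m, ∑ j : Fin m, (if i < j then w i ^ (k - 1) * w j else 0) ≤ LL k := by
  rw [repr_sum k m w, Finset.mul_sum]
  have hstep : ∀ i ∈ Finset.range m,
      (k : ℝ) * (vv m w i ^ (k - 1) * SS m w (i + 1))
        ≤ LL k * (SS m w i ^ k) - LL k * (SS m w (i+1) ^ k) := by
    intro i hi
    have him := Finset.mem_range.mp hi
    have hvi : vv m w i = SS m w i - SS m w (i+1) := by
      rw [SS_succ m w him]; ring
    have hD := lemD k hk (SS_nonneg m w hw (i+1)) (SS_succ_le m w hw him)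
    rw [← hvi] at hD
    calc (k : ℝ) * (vv m w i ^ (k - 1) * SS m w (i + 1))
        = (k : ℝ) * vv m w i ^ (k - 1) * SS m w (i + 1) := by ring
      _ ≤ LL k * (SS m w i ^ k - SS m w (i+1) ^ k) := hD
      _ = LL k * (SS m w i ^ k) - LL k * (SS m w (i+1) ^ k) := by ring
  calc (∑ i ∈ Finset.range m, (k : ℝ) * (vv m w i ^ (k - 1) * SS m w (i + 1)))
      ≤ ∑ i ∈ Finset.range m, (LL k * (SS m w i ^ k) - LL k * (SS m w (i+1) ^ k)) :=
        Finset.sum_le_sum hstep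
    _ = LL k * (SS m w 0 ^ k) - LL k * (SS m w m ^ k) :=
        Finset.sum_range_sub' (fun i => LL k * (SS m w i ^ k)) m
    _ = LL k := by rw [SS_zero m w hw1, SS_top m w, one_pow, zero_pow (by omega : k ≠ 0)]; ring

/-- Geometric weights realize `gf k x · (1 - ((1-x)^k)^{m-1})`. -/
lemma lemG (k : ℕ) (hk : 3 ≤ k) {x : ℝ} (hx : x ∈ Set.Ioc (0:ℝ) 1) (m : ℕ) (hm : 1 ≤ m) :
    ∃ w : Fin m → ℝ, (∀ i, 0 ≤ w i) ∧ (∑ i, w i) = 1 ∧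
      gf k x * (1 - ((1 - x) ^ k) ^ (m - 1))
        = (k : ℝ) * ∑ i : Fin m, ∑ j : Fin m, (if i < j then w i ^ (k - 1) * w j else 0) := by
  obtain ⟨m', rfl⟩ : ∃ m', m = m' + 1 := ⟨m - 1, by omega⟩
  set r : ℝ := 1 - x with hrdef
  have hr0 : 0 ≤ r := by have := hx.2; simp only [hrdef]; linarith
  have hr1 : r < 1 := by have := hx.1; simp only [hrdef]; linarith
  have hrne : r ≠ 1 := ne_of_lt hr1
  have hxne : x ≠ 0 := ne_of_gt hx.1
  set q : ℝ := r ^ k with hqdef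
  have hq1 : q < 1 := by
    rw [hqdef]; exact pow_lt_one₀ hr0 hr1 (by omega)
  have hqne : q ≠ 1 := ne_of_lt hq1
  have hgeom : ∀ n : ℕ, x * ∑ j ∈ Finset.range n, r ^ j = 1 - r ^ n := by
    intro n
    have hd : (1 - x) - 1 ≠ 0 := by simpa using hxne
    rw [geom_sum_eq hrne, hrdef, ← mul_div_assoc, div_eq_iff hd]
    ring
  set w : Fin (m'+1) → ℝ := fun i => if i.val = m' then r ^ m' else x * r ^ i.val with hwdef
  have hwnn : ∀ i, 0 ≤ w i := by
    intro i
    simp only [hwdef]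
    split
    · positivity
    · have := hx.1; positivity
  have hsum1 : (∑ i, w i) = 1 := by
    rw [hwdef, Fin.sum_univ_eq_sum_range (fun n => if n = m' then r ^ m' else x * r ^ n) (m'+1)]
    rw [Finset.sum_range_succ]
    have h1 : ∑ n ∈ Finset.range m', (if n = m' then r ^ m' else x * r ^ n)
        = ∑ n ∈ Finset.range m', x * r ^ n := by
      apply Finset.sum_congr rfl
      intro n hn
      rw [if_neg (Nat.ne_of_lt (Finset.mem_range.mp hn))]
    rw [h1, if_pos rfl, ← Finset.mul_sum, hgeom]
    ring
  refine ⟨w, hwnn, hsum1, ?_⟩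
  rw [repr_sum k (m'+1) w]
  have hSrange : ∀ n, n ≤ m' → ∑ j ∈ Finset.range n, vv (m'+1) w j = 1 - r ^ n := by
    intro n hn
    have h2 : ∀ j ∈ Finset.range n, vv (m'+1) w j = x * r ^ j := by
      intro j hj
      have hjn := Finset.mem_range.mp hj
      have hjm : j < m' + 1 := by omega
      simp only [vv, dif_pos hjm, hwdef]
      rw [if_neg (by omega : ¬ j = m')]
    rw [Finset.sum_congr rfl h2, ← Finset.mul_sum, hgeom]
  have hSfull : ∑ j ∈ Finset.range (m'+1), vv (m'+1) w j = 1 := by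
    rw [← Fin.sum_univ_eq_sum_range (fun n => vv (m'+1) w n) (m'+1), ← hsum1]
    apply Finset.sum_congr rfl
    intro i _
    simp [vv, i.isLt]
  have hSS : ∀ n, n ≤ m' + 1 → SS (m'+1) w n = 1 - ∑ j ∈ Finset.range n, vv (m'+1) w j := by
    intro n hn
    rw [SS, Finset.sum_Ico_eq_sub _ hn, hSfull]
  have hSSr : ∀ n, n ≤ m' → SS (m'+1) w n = r ^ n := by
    intro n hn
    rw [hSS n (by omega), hSrange n hn]; ring
  have hSStop : SS (m'+1) w (m'+1) = 0 := by
    rw [hSS (m'+1) le_rfl, hSfull]; ring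
  rw [Finset.sum_range_succ, hSStop, mul_zero, add_zero]
  have hterm : ∀ i ∈ Finset.range m',
      vv (m'+1) w i ^ (k-1) * SS (m'+1) w (i+1) = x^(k-1) * r * q ^ i := by
    intro i hi
    have him := Finset.mem_range.mp hi
    have hvi : vv (m'+1) w i = x * r ^ i := by
      simp only [vv, dif_pos (by omega : i < m'+1), hwdef]
      rw [if_neg (by omega : ¬ i = m')]
    rw [hvi, hSSr (i+1) (by omega)]
    have hk1 : (k - 1) + 1 = k := by omega
    calc (x * r^i)^(k-1) * r^(i+1)
        = x^(k-1) * ((r^i)^(k-1) * r^i) * r := by rw [mul_pow, pow_succ]; ring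
      _ = x^(k-1) * (r^i)^((k-1)+1) * r := by rw [pow_succ]
      _ = x^(k-1) * (r^k)^i * r := by rw [hk1, ← pow_mul, ← pow_mul, Nat.mul_comm]
      _ = x^(k-1) * r * q ^ i := by rw [hqdef]; ring
  rw [Finset.sum_congr rfl hterm]
  rw [show (∑ i ∈ Finset.range m', x^(k-1) * r * q ^ i)
      = x^(k-1) * r * ∑ i ∈ Finset.range m', q ^ i from by rw [Finset.mul_sum]]
  rw [geom_sum_eq hqne]
  have hne' : (1 : ℝ) - (1 - x) ^ k ≠ 0 := by
    rw [← hrdef, ← hqdef]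
    intro h; apply hqne; linarith
  rw [gf]
  show (k:ℝ) * x ^ (k-1) * (1 - x) / (1 - (1-x)^k) * (1 - q ^ ((m'+1) - 1))
      = (k:ℝ) * (x^(k-1) * r * ((q ^ m' - 1)/(q - 1)))
  rw [show (m'+1) - 1 = m' from rfl, hrdef, hqdef, hrdef]
  have hne'' : (1 - x) ^ k - 1 ≠ 0 := by intro h; apply hne'; linarith
  field_simp [hne', hne'']
  ring

/-- Zero extension preserves the value. -/
lemma lemExt (k m : ℕ) (hk : 3 ≤ k) (w : Fin m → ℝ) (hw : ∀ i, 0 ≤ w i)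
    (hw1 : (∑ i, w i) = 1) :
    ∃ w' : Fin (m+1) → ℝ, (∀ i, 0 ≤ w' i) ∧ (∑ i, w' i) = 1 ∧
      (∑ i : Fin (m+1), ∑ j : Fin (m+1), if i < j then w' i ^ (k - 1) * w' j else 0)
        = (∑ i : Fin m, ∑ j : Fin m, if i < j then w i ^ (k - 1) * w j else 0) := by
  refine ⟨fun i => vv m w i.val, ?_, ?_, ?_⟩
  · intro i; exact vv_nonneg m w hw i.val
  · rw [Fin.sum_univ_castSucc]
    have h1 : ∀ i : Fin m, vv m w (i.castSucc).val = w i := by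
      intro i
      simp [vv, i.isLt, Fin.castSucc]
    have h2 : vv m w (Fin.last m).val = 0 := by simp [vv]
    rw [h2, add_zero, ← hw1]
    exact Finset.sum_congr rfl fun i _ => h1 i
  · set w' : Fin (m+1) → ℝ := fun i => vv m w i.val with hw'def
    have hvv : ∀ n, vv (m+1) w' n = vv m w n := by
      intro n
      by_cases hn : n < m + 1
      · simp only [vv, dif_pos hn, hw'def]
      · have hnm : ¬ n < m := by omega
        simp only [vv, dif_neg hn, dif_neg hnm]
    have hSS : ∀ n, n ≤ m → SS (m+1) w' n = SS m w n := by
      intro n hn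
      rw [SS, SS, Finset.sum_Ico_succ_top hn]
      rw [hvv]
      have h0 : vv m w m = 0 := by simp [vv]
      rw [h0, add_zero]
      exact Finset.sum_congr rfl fun j _ => hvv j
    rw [repr_sum k (m+1) w', repr_sum k m w, Finset.sum_range_succ]
    have hlast : vv (m+1) w' m ^ (k-1) * SS (m+1) w' (m+1) = 0 := by
      rw [hvv]
      have h0 : vv m w m = 0 := by simp [vv]
      rw [h0, zero_pow (by omega : k - 1 ≠ 0), zero_mul]
    rw [hlast, add_zero]
    apply Finset.sum_congr rfl
    intro i hi
    have him := Finset.mem_range.mp hi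
    rw [hvv, hSS (i+1) (by omega)]

lemma FmSet_le (k : ℕ) (hk : 3 ≤ k) (m : ℕ) : ∀ r ∈ FmSet k m, r ≤ LL k := by
  rintro r ⟨w, hw, hw1, rfl⟩
  exact lemE k hk m w hw hw1

lemma FmSet_bdd (k : ℕ) (hk : 3 ≤ k) (m : ℕ) : BddAbove (FmSet k m) :=
  ⟨LL k, FmSet_le k hk m⟩

lemma FmSet_nonempty (k : ℕ) (hk : 3 ≤ k) (m : ℕ) (hm : 1 ≤ m) : (FmSet k m).Nonempty := by
  obtain ⟨w, hw, hw1, hval⟩ := lemG k hk (x := 1) (by norm_num) m hm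
  exact ⟨_, w, hw, hw1, hval⟩

lemma Fm_le_LL (k : ℕ) (hk : 3 ≤ k) (m : ℕ) : Fm k m ≤ LL k := by
  rcases Nat.eq_zero_or_pos m with rfl | hm
  · have hempty : FmSet k 0 = ∅ := by
      ext r
      simp only [FmSet, Set.mem_setOf_eq, Set.mem_empty_iff_false, iff_false]
      rintro ⟨w, hw, hw1, hval⟩
      simp at hw1
    rw [Fm_eq, hempty, Real.sSup_empty]
    exact LL_nonneg k hk
  · rw [Fm_eq]
    exact csSup_le (FmSet_nonempty k hk m hm) (FmSet_le k hk m)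

lemma Fm_mono (k : ℕ) (hk : 3 ≤ k) : Monotone (fun m => Fm k m) := by
  apply monotone_nat_of_le_succ
  intro m
  rcases Nat.eq_zero_or_pos m with rfl | hm
  · have hempty : FmSet k 0 = ∅ := by
      ext r
      simp only [FmSet, Set.mem_setOf_eq, Set.mem_empty_iff_false, iff_false]
      rintro ⟨w, hw, hw1, hval⟩
      simp at hw1
    show Fm k 0 ≤ Fm k 1
    rw [Fm_eq, hempty, Real.sSup_empty, Fm_eq]
    have h0 : (0:ℝ) ∈ FmSet k 1 := by
      refine ⟨fun _ => 1, fun _ => zero_le_one, by simp, ?_⟩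
      have hz : (∑ i : Fin 1, ∑ j : Fin 1, if i < j then (1:ℝ) ^ (k-1) * 1 else 0) = 0 := by
        apply Finset.sum_eq_zero; intro i _
        apply Finset.sum_eq_zero; intro j _
        rw [if_neg]; omega
      rw [hz, mul_zero]
    exact le_csSup (FmSet_bdd k hk 1) h0
  · show Fm k m ≤ Fm k (m+1)
    rw [Fm_eq, Fm_eq]
    apply csSup_le (FmSet_nonempty k hk m hm)
    rintro r ⟨w, hw, hw1, rfl⟩
    obtain ⟨w', hw', hw1', hval⟩ := lemExt k m hk w hw hw1
    apply le_csSup (FmSet_bdd k hk (m+1))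
    exact ⟨w', hw', hw1', by rw [hval]⟩

lemma Fm_bddAbove (k : ℕ) (hk : 3 ≤ k) : BddAbove (Set.range fun m => Fm k m) := by
  refine ⟨LL k, ?_⟩
  rintro y ⟨m, rfl⟩
  exact Fm_le_LL k hk m

lemma ciSup_Fm_eq (k : ℕ) (hk : 3 ≤ k) : (⨆ m, Fm k m) = LL k := by
  apply le_antisymm
  · exact ciSup_le (Fm_le_LL k hk)
  · have hne : (gf k '' Set.Ioc 0 1).Nonempty :=
      ⟨gf k 1, Set.mem_image_of_mem _ (by norm_num)⟩
    apply csSup_le hne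
    rintro y ⟨x, hx, rfl⟩
    -- show gf k x ≤ ⨆ m, Fm k m
    set q : ℝ := (1 - x) ^ k with hqdef
    have hq0 : 0 ≤ q := by
      have h1x : (0:ℝ) ≤ 1 - x := by linarith [hx.2]
      rw [hqdef]; positivity
    have hq1 : q < 1 := by
      rw [hqdef]
      exact pow_lt_one₀ (by linarith [hx.2]) (by linarith [hx.1]) (by omega)
    have htq : Filter.Tendsto (fun m : ℕ => q ^ (m - 1)) Filter.atTop (nhds 0) :=
      (tendsto_pow_atTop_nhds_zero_of_lt_one hq0 hq1).comp (Filter.tendsto_sub_atTop_nat 1)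
    have ht : Filter.Tendsto (fun m : ℕ => gf k x * (1 - q ^ (m - 1))) Filter.atTop
        (nhds (gf k x)) := by
      have := tendsto_const_nhds (x := gf k x) (f := Filter.atTop (α := ℕ))
      have h2 := Filter.Tendsto.mul this ((tendsto_const_nhds (x := (1:ℝ))).sub htq)
      simpa using h2
    apply le_of_tendsto ht
    rw [Filter.eventually_atTop]
    refine ⟨1, fun m hm => ?_⟩
    obtain ⟨w, hw, hw1, hval⟩ := lemG k hk hx m hm
    have hmem : gf k x * (1 - q ^ (m - 1)) ∈ FmSet k m := ⟨w, hw, hw1, by rw [hqdef] at *; exact hval⟩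
    calc gf k x * (1 - q ^ (m - 1)) ≤ Fm k m := le_csSup (FmSet_bdd k hk m) hmem
      _ ≤ ⨆ m, Fm k m := le_ciSup (Fm_bddAbove k hk) m

end FmAux

/-- `(F_m)` is nondecreasing, bounded above by `1`, and converges to
`sup_{x ∈ (0,1]} k·x^{k−1}·(1−x)/(1−(1−x)^k)`. -/
theorem Fm_limit (k : ℕ) (hk : 3 ≤ k) :
    (∀ m : ℕ, 1 ≤ m → Fm k m ≤ Fm k (m + 1)) ∧
    (∀ m : ℕ, 1 ≤ m → Fm k m ≤ 1) ∧
    Filter.Tendsto (fun m : ℕ => Fm k m) Filter.atTop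
      (nhds (sSup ((fun x : ℝ => (k : ℝ) * x ^ (k - 1) * (1 - x) / (1 - (1 - x) ^ k)) ''
        Set.Ioc 0 1))) := by
  refine ⟨?_, ?_, ?_⟩
  · intro m _
    exact FmAux.Fm_mono k hk (Nat.le_succ m)
  · intro m _
    exact le_trans (FmAux.Fm_le_LL k hk m) (FmAux.LL_le_one k hk)
  · have h := tendsto_atTop_ciSup (FmAux.Fm_mono k hk) (FmAux.Fm_bddAbove k hk)
    rw [FmAux.ciSup_Fm_eq k hk] at h
    exact h
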